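/- For every positive integer n and every integer p, the sum over k from 0 to n of (-1)^{(p-1)(n-k)} * (n/(n+k)) * C(n+k, n-k) * L_p^{2k} equals L_{2pn}/2, where L_m denotes the m-th Lucas number. -/

import Mathlib

open Finset

/-- Fibonacci numbers extended to all integers: `F_{-n} = (-1)^{n-1} F_n`. -/
def fibZ (n : ℤ) : ℤ :=
  if 0 ≤ n then Nat.fib n.toNat else (-1) ^ (n.natAbs + 1) * Nat.fib n.natAbs

/-- Lucas numbers extended to all integers: `L_n = F_{n-1} + F_{n+1}`. -/
def lucasZ (n : ℤ) : ℤ := fibZ (n - 1) + fibZ (n + 1)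

open Real goldenRatio

def bb (n k : ℕ) : ℕ := (n + k).choose (2 * k) + (n + k - 1).choose (2 * k)

lemma bb_zero (n : ℕ) : bb n 0 = 2 := by simp [bb]

lemma bb_of_lt {n k : ℕ} (h : n < k) : bb n k = 0 := by
  unfold bb
  rw [Nat.choose_eq_zero_of_lt (by omega), Nat.choose_eq_zero_of_lt (by omega)]

lemma pas (M K : ℕ) :
    (M+3).choose (K+2) + (M+2).choose (K+2) + (M+1).choose (K+2) + M.choose (K+2)
    = (M+1).choose K + M.choose K + 2 * ((M+2).choose (K+2) + (M+1).choose (K+2)) := by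
  have h1 : (M+3).choose (K+2) = (M+2).choose (K+1) + (M+2).choose (K+2) :=
    Nat.choose_succ_succ (M+2) (K+1)
  have h2 : (M+2).choose (K+2) = (M+1).choose (K+1) + (M+1).choose (K+2) :=
    Nat.choose_succ_succ (M+1) (K+1)
  have h3 : (M+2).choose (K+1) = (M+1).choose K + (M+1).choose (K+1) :=
    Nat.choose_succ_succ (M+1) K
  have h4 : (M+1).choose (K+2) = M.choose (K+1) + M.choose (K+2) :=
    Nat.choose_succ_succ M (K+1)
  have h5 : (M+1).choose (K+1) = M.choose K + M.choose (K+1) :=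
    Nat.choose_succ_succ M K
  omega

lemma bb_rec (n k : ℕ) :
    bb (n + 2) (k + 1) + bb n (k + 1) = bb (n + 1) k + 2 * bb (n + 1) (k + 1) := by
  unfold bb
  rw [show n + 2 + (k + 1) = n + k + 3 by ring, show n + k + 3 - 1 = n + k + 2 from rfl,
    show n + (k + 1) = n + k + 1 by ring, show n + k + 1 - 1 = n + k from rfl,
    show n + 1 + k = n + k + 1 by ring, show n + 1 + (k + 1) = n + k + 2 by ring,
    show n + k + 2 - 1 = n + k + 1 from rfl, show 2 * (k + 1) = 2 * k + 2 by ring]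
  simp only [Nat.add_sub_cancel]
  have := pas (n + k) (2 * k)
  omega


lemma pad_sum (w : ℝ) (n j : ℕ) (h : n ≤ j) :
    ∑ k ∈ range (n + 1), (bb n k : ℝ) * w ^ k = ∑ k ∈ range (j + 1), (bb n k : ℝ) * w ^ k := by
  apply Finset.sum_subset (Finset.range_subset_range.2 (by omega))
  intro x hx hx'
  simp only [Finset.mem_range] at hx hx'
  rw [bb_of_lt (by omega)]
  simp

lemma T_rec (w : ℝ) (m : ℕ) :
    ∑ k ∈ range (m + 3), (bb (m + 2) k : ℝ) * w ^ k
      + ∑ k ∈ range (m + 1), (bb m k : ℝ) * w ^ k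
    = (w + 2) * ∑ k ∈ range (m + 2), (bb (m + 1) k : ℝ) * w ^ k := by
  have key : ∀ f : ℕ → ℝ, ∑ k ∈ range (m + 3), f k = (∑ j ∈ range (m + 2), f (j + 1)) + f 0 :=
    fun f => Finset.sum_range_succ' f (m + 2)
  have hC : ∑ k ∈ range (m + 1), (bb m k : ℝ) * w ^ k
      = ∑ k ∈ range (m + 3), (bb m k : ℝ) * w ^ k :=
    pad_sum w m (m + 2) (by omega)
  have hB : ∑ k ∈ range (m + 2), (bb (m + 1) k : ℝ) * w ^ k
      = ∑ k ∈ range (m + 3), (bb (m + 1) k : ℝ) * w ^ k :=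
    pad_sum w (m + 1) (m + 2) (by omega)
  have E0 : (w + 2) * ∑ k ∈ range (m + 2), (bb (m + 1) k : ℝ) * w ^ k
      = w * ∑ k ∈ range (m + 2), (bb (m + 1) k : ℝ) * w ^ k
        + 2 * ∑ k ∈ range (m + 2), (bb (m + 1) k : ℝ) * w ^ k := by ring
  have E1 : w * ∑ k ∈ range (m + 2), (bb (m + 1) k : ℝ) * w ^ k
      = ∑ j ∈ range (m + 2), (bb (m + 1) j : ℝ) * w ^ (j + 1) := by
    rw [Finset.mul_sum]
    exact Finset.sum_congr rfl fun j _ => by ring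
  have E2 : 2 * ∑ k ∈ range (m + 2), (bb (m + 1) k : ℝ) * w ^ k
      = (∑ j ∈ range (m + 2), 2 * (bb (m + 1) (j + 1) : ℝ) * w ^ (j + 1)) + 4 := by
    rw [hB, key (fun k => (bb (m + 1) k : ℝ) * w ^ k), mul_add, Finset.mul_sum]
    simp only [bb_zero, pow_zero, mul_one]
    congr 1
    · exact Finset.sum_congr rfl fun j _ => by ring
    · norm_num
  rw [hC, ← Finset.sum_add_distrib,
    key (fun k => (bb (m + 2) k : ℝ) * w ^ k + (bb m k : ℝ) * w ^ k), E0, E1, E2]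
  simp only [bb_zero, pow_zero]
  have : (∑ j ∈ range (m + 2),
      ((bb (m + 2) (j + 1) : ℝ) * w ^ (j + 1) + (bb m (j + 1) : ℝ) * w ^ (j + 1)))
      = ∑ j ∈ range (m + 2),
      ((bb (m + 1) j : ℝ) * w ^ (j + 1) + 2 * (bb (m + 1) (j + 1) : ℝ) * w ^ (j + 1)) := by
    refine Finset.sum_congr rfl fun j _ => ?_
    have h := bb_rec m j
    have h' : (bb (m + 2) (j + 1) : ℝ) + (bb m (j + 1) : ℝ)
        = (bb (m + 1) j : ℝ) + 2 * (bb (m + 1) (j + 1) : ℝ) := by exact_mod_cast h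
    linear_combination (w ^ (j + 1)) * h'
  rw [this, Finset.sum_add_distrib]
  push_cast
  ring

lemma T_eq (u : ℝ) (hu : u ≠ 0) (n : ℕ) :
    ∑ k ∈ range (n + 1), (bb n k : ℝ) * (u + u⁻¹ - 2) ^ k = u ^ n + (u⁻¹) ^ n := by
  set w : ℝ := u + u⁻¹ - 2 with hw
  have H : ∀ m : ℕ,
      (∑ k ∈ range (m + 1), (bb m k : ℝ) * w ^ k = u ^ m + (u⁻¹) ^ m)
      ∧ (∑ k ∈ range (m + 2), (bb (m + 1) k : ℝ) * w ^ k = u ^ (m + 1) + (u⁻¹) ^ (m + 1)) := by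
    intro m
    induction m with
    | zero =>
      constructor
      · simp [bb_zero]; norm_num
      · rw [Finset.sum_range_succ, Finset.sum_range_succ, Finset.sum_range_zero]
        have h1 : bb 1 1 = 1 := by decide
        have h0 : bb 1 0 = 2 := bb_zero 1
        rw [h1, h0]
        push_cast
        rw [hw]
        ring
    | succ m ih =>
      refine ⟨ih.2, ?_⟩
      have hr := T_rec w m
      have h1 := ih.1
      have h2 := ih.2
      have hstep : ∑ k ∈ range (m + 3), (bb (m + 2) k : ℝ) * w ^ k
          = (w + 2) * (u ^ (m + 1) + (u⁻¹) ^ (m + 1)) - (u ^ m + (u⁻¹) ^ m) := by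
        rw [← h1, ← h2]; linarith [hr]
      rw [show m + 1 + 2 = m + 3 from rfl, hstep, hw]
      have huv : u * u⁻¹ = 1 := mul_inv_cancel₀ hu
      field_simp
      linear_combination (u⁻¹ ^ m * (u - u⁻¹)) * huv
  exact (H n).1



lemma sqrt5_ne : (√5 : ℝ) ≠ 0 := by positivity

lemma fibZ_real (m : ℤ) : (fibZ m : ℝ) = (φ ^ m - ψ ^ m) / √5 := by
  rcases le_or_gt 0 m with h | h
  · rw [fibZ, if_pos h]
    lift m to ℕ using h
    rw [Int.toNat_natCast, zpow_natCast, zpow_natCast]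
    exact_mod_cast Real.coe_fib_eq m
  · rw [fibZ, if_neg (by omega)]
    obtain ⟨j, hj⟩ : ∃ j : ℕ, m = -(j : ℤ) := ⟨m.natAbs, by omega⟩
    subst hj
    have hna : (-(j:ℤ)).natAbs = j := by simp
    rw [hna]
    have h1 : φ ^ (-(j:ℤ)) = (-ψ) ^ j := by
      rw [zpow_neg, zpow_natCast, ← inv_pow, inv_goldenRatio]
    have h2 : ψ ^ (-(j:ℤ)) = (-φ) ^ j := by
      rw [zpow_neg, zpow_natCast, ← inv_pow, inv_goldenConj]
    have key : (-ψ) ^ j - (-φ) ^ j = (-1) ^ (j + 1) * (φ ^ j - ψ ^ j) := by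
      rw [neg_pow ψ j, neg_pow φ j]; ring
    have hb : (Nat.fib j : ℝ) = (φ ^ j - ψ ^ j) / √5 := Real.coe_fib_eq j
    rw [h1, h2, key, mul_div_assoc, ← hb]
    push_cast
    ring

lemma lucasZ_real (m : ℤ) : (lucasZ m : ℝ) = φ ^ m + ψ ^ m := by
  rw [lucasZ]
  push_cast
  rw [fibZ_real, fibZ_real]
  have e1 : φ ^ (m - 1) = φ ^ m * φ⁻¹ := by
    rw [zpow_sub₀ goldenRatio_ne_zero, zpow_one, div_eq_mul_inv]
  have e2 : φ ^ (m + 1) = φ ^ m * φ := by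
    rw [zpow_add₀ goldenRatio_ne_zero, zpow_one]
  have e3 : ψ ^ (m - 1) = ψ ^ m * ψ⁻¹ := by
    rw [zpow_sub₀ goldenConj_ne_zero, zpow_one, div_eq_mul_inv]
  have e4 : ψ ^ (m + 1) = ψ ^ m * ψ := by
    rw [zpow_add₀ goldenConj_ne_zero, zpow_one]
  rw [e1, e2, e3, e4, inv_goldenRatio, inv_goldenConj]
  have h5 : φ - ψ = √5 := goldenRatio_sub_goldenConj
  rw [← add_div, div_eq_iff sqrt5_ne]
  linear_combination (φ ^ m + ψ ^ m) * h5

lemma zpow_two_mul_eq (a : ℝ) (p : ℤ) : a ^ (2 * p) = (a ^ p) ^ (2:ℕ) := by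
  rw [← zpow_natCast (a ^ p) 2, ← zpow_mul]
  norm_num [mul_comm]

lemma zpow_mul_nat (a : ℝ) (p : ℤ) (n : ℕ) : (a ^ p) ^ n = a ^ (p * n) := by
  rw [← zpow_natCast (a ^ p) n, ← zpow_mul]

lemma gold_goldConj_zpow (p : ℤ) : φ ^ (2 * p) * ψ ^ (2 * p) = 1 := by
  rw [← mul_zpow, goldenRatio_mul_goldenConj, zpow_mul]
  norm_num

lemma lucas_sq (p : ℤ) : (lucasZ p : ℝ) ^ 2 = φ ^ (2 * p) + ψ ^ (2 * p) + 2 * (-1 : ℝ) ^ p := by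
  rw [lucasZ_real, zpow_two_mul_eq, zpow_two_mul_eq,
    show ((-1 : ℝ) ^ p) = φ ^ p * ψ ^ p by rw [← mul_zpow, goldenRatio_mul_goldenConj]]
  ring

lemma real_odd (p : ℤ) (hp : Odd p) (n : ℕ) :
    ∑ k ∈ range (n + 1), (bb n k : ℝ) * ((lucasZ p : ℝ) ^ 2) ^ k = (lucasZ (2 * p * n) : ℝ) := by
  have hu : φ ^ (2 * p) ≠ 0 := zpow_ne_zero _ goldenRatio_ne_zero
  have hinv : (φ ^ (2 * p))⁻¹ = ψ ^ (2 * p) := inv_eq_of_mul_eq_one_right (gold_goldConj_zpow p)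
  have hx : (lucasZ p : ℝ) ^ 2 = φ ^ (2 * p) + (φ ^ (2 * p))⁻¹ - 2 := by
    rw [hinv, lucas_sq, Odd.neg_one_zpow hp]; ring
  rw [hx, T_eq _ hu n, hinv, zpow_mul_nat, zpow_mul_nat, lucasZ_real (2 * p * n)]

lemma real_even (p : ℤ) (hp : Even p) (n : ℕ) :
    ∑ k ∈ range (n + 1), (bb n k : ℝ) * (-(lucasZ p : ℝ) ^ 2) ^ k
      = (-1) ^ n * (lucasZ (2 * p * n) : ℝ) := by
  have hu : -φ ^ (2 * p) ≠ 0 := neg_ne_zero.2 (zpow_ne_zero _ goldenRatio_ne_zero)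
  have hinv : (-φ ^ (2 * p))⁻¹ = -ψ ^ (2 * p) := by
    rw [inv_neg, inv_eq_of_mul_eq_one_right (gold_goldConj_zpow p)]
  have hx : -(lucasZ p : ℝ) ^ 2 = -φ ^ (2 * p) + (-φ ^ (2 * p))⁻¹ - 2 := by
    rw [hinv, lucas_sq, Even.neg_one_zpow hp]; ring
  rw [hx, T_eq _ hu n, hinv, neg_pow (φ ^ (2 * p)) n, neg_pow (ψ ^ (2 * p)) n, zpow_mul_nat, zpow_mul_nat,
    lucasZ_real (2 * p * n)]
  ring

lemma neg_one_pow_inv (j : ℕ) : ((-1 : ℚ) ^ j)⁻¹ = (-1) ^ j := by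
  rcases Nat.even_or_odd j with h | h
  · rw [h.neg_one_pow]; norm_num
  · rw [h.neg_one_pow]; norm_num

lemma coeffq (n k : ℕ) (hn : 0 < n) (hk : k ≤ n) :
    ((n : ℚ) / (n + k)) * (Nat.choose (n + k) (n - k) : ℚ) = (bb n k : ℚ) / 2 := by
  have hcs : (n + k).choose (n - k) = (n + k).choose (2 * k) := by
    rw [← Nat.choose_symm (by omega : 2 * k ≤ n + k), show n + k - 2 * k = n - k by omega]
  have hsub : (n - k) * (n + k).choose (2 * k) = (n + k) * (n + k - 1).choose (2 * k) := by
    have h1 : (n + k) * (n + k - 1).choose (2 * k) = (n + k).choose (2 * k + 1) * (2 * k + 1) := by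
      have h0 : n + k - 1 + 1 = n + k := by omega
      have h := Nat.add_one_mul_choose_eq (n + k - 1) (2 * k)
      simp only [Nat.succ_eq_add_one, h0] at h
      exact h
    have h2 : (n + k).choose (2 * k + 1) * (2 * k + 1) = (n + k).choose (2 * k) * (n + k - 2 * k) :=
      Nat.choose_succ_right_eq (n + k) (2 * k)
    rw [h1, h2, show n + k - 2 * k = n - k by omega, mul_comm]
  have hnat : 2 * n * ((n + k).choose (2 * k)) = (n + k) * bb n k := by
    unfold bb
    have : 2 * n = (n + k) + (n - k) := by omega
    rw [this, add_mul, mul_add, hsub]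
  have hnk : ((n : ℚ) + k) ≠ 0 := by
    have h0 : (0 : ℚ) < n := by exact_mod_cast hn
    positivity
  rw [hcs, div_mul_eq_mul_div, div_eq_div_iff hnk (two_ne_zero)]
  have := congrArg (Nat.cast : ℕ → ℚ) hnat
  push_cast at this ⊢
  linarith [this]

theorem stmt_7 (n : ℕ) (hn : 0 < n) (p : ℤ) :
    ∑ k ∈ range (n + 1), (-1 : ℚ) ^ ((p - 1) * ((n : ℤ) - k)) *
      ((n : ℚ) / (n + k)) * (Nat.choose (n + k) (n - k)) * (lucasZ p : ℚ) ^ (2 * k) =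
    (lucasZ (2 * p * n) : ℚ) / 2 := by
  rcases Int.even_or_odd p with hpe | hpo
  · -- p even
    have hodd : Odd (p - 1) := hpe.sub_odd odd_one
    have hsign : ∀ k : ℕ, (-1 : ℚ) ^ ((p - 1) * ((n : ℤ) - k)) = (-1) ^ n * (-1) ^ k := by
      intro k
      rw [zpow_mul, Odd.neg_one_zpow hodd, zpow_sub₀ (by norm_num : (-1 : ℚ) ≠ 0),
        zpow_natCast, zpow_natCast, div_eq_mul_inv, neg_one_pow_inv]
    have hbase : ∑ k ∈ range (n + 1), (bb n k : ℚ) * (-(lucasZ p : ℚ) ^ 2) ^ k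
        = (-1) ^ n * (lucasZ (2 * p * n) : ℚ) := by
      have h := real_even p hpe n
      apply Rat.cast_injective (α := ℝ)
      push_cast
      convert h using 2
    calc ∑ k ∈ range (n + 1), (-1 : ℚ) ^ ((p - 1) * ((n : ℤ) - k)) *
          ((n : ℚ) / (n + k)) * (Nat.choose (n + k) (n - k)) * (lucasZ p : ℚ) ^ (2 * k)
        = ∑ k ∈ range (n + 1), ((-1 : ℚ) ^ n / 2) * ((bb n k : ℚ) * (-(lucasZ p : ℚ) ^ 2) ^ k) := by
          refine Finset.sum_congr rfl fun k hk => ?_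
          have hk' : k ≤ n := by simpa [Nat.lt_succ_iff] using Finset.mem_range.1 hk
          rw [hsign k, mul_assoc ((-1 : ℚ) ^ n * (-1) ^ k), coeffq n k hn hk']
          rw [neg_pow, pow_mul]
          ring
      _ = ((-1 : ℚ) ^ n / 2) * ((-1) ^ n * (lucasZ (2 * p * n) : ℚ)) := by
          rw [← Finset.mul_sum, hbase]
      _ = (lucasZ (2 * p * n) : ℚ) / 2 := by
          have : (-1 : ℚ) ^ n * (-1) ^ n = 1 := by
            rw [← pow_add]; exact Even.neg_one_pow ⟨n, rfl⟩
          field_simp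
          linear_combination ((lucasZ (2 * p * n) : ℚ)) * this
  · -- p odd
    have heven : Even (p - 1) := Odd.sub_odd hpo odd_one
    have hsign : ∀ k : ℕ, (-1 : ℚ) ^ ((p - 1) * ((n : ℤ) - k)) = 1 := by
      intro k
      exact Even.neg_one_zpow (heven.mul_right _)
    have hbase : ∑ k ∈ range (n + 1), (bb n k : ℚ) * ((lucasZ p : ℚ) ^ 2) ^ k
        = (lucasZ (2 * p * n) : ℚ) := by
      have h := real_odd p hpo n
      apply Rat.cast_injective (α := ℝ)
      push_cast
      convert h using 2
    calc ∑ k ∈ range (n + 1), (-1 : ℚ) ^ ((p - 1) * ((n : ℤ) - k)) *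
          ((n : ℚ) / (n + k)) * (Nat.choose (n + k) (n - k)) * (lucasZ p : ℚ) ^ (2 * k)
        = ∑ k ∈ range (n + 1), (1 / 2 : ℚ) * ((bb n k : ℚ) * ((lucasZ p : ℚ) ^ 2) ^ k) := by
          refine Finset.sum_congr rfl fun k hk => ?_
          have hk' : k ≤ n := by simpa [Nat.lt_succ_iff] using Finset.mem_range.1 hk
          rw [hsign k, one_mul, coeffq n k hn hk', pow_mul]
          ring
      _ = (1 / 2 : ℚ) * (lucasZ (2 * p * n) : ℚ) := by rw [← Finset.mul_sum, hbase]
      _ = (lucasZ (2 * p * n) : ℚ) / 2 := by ring
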